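/- Let Y be a finite multiset of natural numbers all of which are ≥ 1. Set d = Σ_{y ∈ Y} y, let ℓ₀ be the number of elements y of Y (with multiplicity) such that 5 does not divide y, let A = Σ_{y ∈ Y} (⌊3y/5⌋ − ⌊2y/5⌋), and let B = Σ_{y ∈ Y} (⌊2y/5⌋ − ⌊y/5⌋). Then d + ℓ₀ = A + 2B + 4 if and only if either (1) Y has exactly two elements y₁, y₂ with 1 ≤ y₁, y₂ ≤ 5, or (2) Y has exactly one element y₁ with 6 ≤ y₁ ≤ 10. Equivalently, the multisets satisfying the condition are exactly the twenty partitions [1,1], [1,2], [1,3], [1,4], [1,5], [2,2], [2,3], [2,4], [2,5], [3,3], [3,4], [3,5], [4,4], [4,5], [5,5], [6], [7], [8], [9], [10]. -/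
import Mathlib

private lemma mq_per (y : ℕ) (hy : 1 ≤ y) :
    y + (if 5 ∣ y then 0 else 1)
      = (3 * y / 5 - 2 * y / 5) + 2 * (2 * y / 5 - y / 5) + 2 * ((y + 4) / 5) := by
  obtain ⟨k, r, hr, rfl⟩ : ∃ k r, r < 5 ∧ y = 5 * k + r :=
    ⟨y / 5, y % 5, Nat.mod_lt _ (by norm_num), (Nat.div_add_mod y 5).symm⟩
  have hdvd : 5 ∣ 5 * k + r ↔ r = 0 := by omega
  interval_cases r <;> simp [hdvd] <;> omega

private lemma mq_sum (Y : Multiset ℕ) (hY : ∀ y ∈ Y, 1 ≤ y) :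
    Y.sum + (Y.filter (fun y => ¬ (5 ∣ y))).card
      = (Y.map (fun y => 3 * y / 5 - 2 * y / 5)).sum
        + 2 * (Y.map (fun y => 2 * y / 5 - y / 5)).sum
        + 2 * (Y.map (fun y => (y + 4) / 5)).sum := by
  induction Y using Multiset.induction with
  | empty => simp
  | cons a s ih =>
    have ha : 1 ≤ a := hY a (Multiset.mem_cons_self a s)
    have ihs := ih (fun y hy => hY y (Multiset.mem_cons_of_mem hy))
    have hper := mq_per a ha
    by_cases h : 5 ∣ a
    · rw [if_pos h] at hper
      simp [Multiset.filter_cons, h, Multiset.sum_cons]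
      omega
    · rw [if_neg h] at hper
      simp [Multiset.filter_cons, h, Multiset.sum_cons]
      omega

/-- Calabi–Yau condition for base changes of the mirror quintic family: for a ramification
profile `Y` over `∞` (a multiset of positive integers), with `d = Σ y`, `ℓ₀` the number of
elements not divisible by `5`, `A = Σ (⌊3y/5⌋ - ⌊2y/5⌋)` and `B = Σ (⌊2y/5⌋ - ⌊y/5⌋)`,
one has `d + ℓ₀ = A + 2B + 4` if and only if either `Y = [y₁, y₂]` with `1 ≤ y₁, y₂ ≤ 5`,
or `Y = [y₁]` with `6 ≤ y₁ ≤ 10`. -/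
theorem mirror_quintic_CY_condition (Y : Multiset ℕ) (hY : ∀ y ∈ Y, 1 ≤ y) :
    Y.sum + (Y.filter (fun y => ¬ (5 ∣ y))).card
      = (Y.map (fun y => 3 * y / 5 - 2 * y / 5)).sum
        + 2 * (Y.map (fun y => 2 * y / 5 - y / 5)).sum + 4 ↔
      (∃ y₁ y₂ : ℕ, Y = {y₁, y₂} ∧ 1 ≤ y₁ ∧ y₁ ≤ 5 ∧ 1 ≤ y₂ ∧ y₂ ≤ 5) ∨
      (∃ y₁ : ℕ, Y = {y₁} ∧ 6 ≤ y₁ ∧ y₁ ≤ 10) := by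
  have key := mq_sum Y hY
  have hS : (Y.sum + (Y.filter (fun y => ¬ (5 ∣ y))).card
      = (Y.map (fun y => 3 * y / 5 - 2 * y / 5)).sum
        + 2 * (Y.map (fun y => 2 * y / 5 - y / 5)).sum + 4)
      ↔ (Y.map (fun y => (y + 4) / 5)).sum = 2 := by omega
  rw [hS]
  constructor
  · intro h2
    have hcard : Y.card ≤ 2 := by
      have h1 : ∀ x ∈ Y.map (fun y => (y + 4) / 5), 1 ≤ x := by
        intro x hx
        obtain ⟨y, hy, rfl⟩ := Multiset.mem_map.mp hx
        have := hY y hy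
        omega
      have := Multiset.card_nsmul_le_sum h1
      simpa [h2, Multiset.card_map] using this
    interval_cases h : Y.card
    · exfalso
      have : Y = 0 := Multiset.card_eq_zero.mp h
      simp [this] at h2
    · obtain ⟨a, rfl⟩ := Multiset.card_eq_one.mp h
      have ha := hY a (by simp)
      right
      refine ⟨a, rfl, ?_, ?_⟩ <;> simp at h2 <;> omega
    · obtain ⟨a, b, rfl⟩ := Multiset.card_eq_two.mp h
      have ha := hY a (by simp)
      have hb := hY b (by simp)
      left
      simp [Multiset.insert_eq_cons] at h2
      exact ⟨a, b, rfl, ha, by omega, hb, by omega⟩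
  · rintro (⟨a, b, rfl, h1, h2, h3, h4⟩ | ⟨a, rfl, h1, h2⟩)
    · simp [Multiset.insert_eq_cons]; omega
    · simp; omega
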